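/- Let H be a Hilbert space, E ⊂ ℝ, and let f : E → H be an L-Lipschitz map. Then the 1-dimensional packing premeasure satisfies P¹(f(E)) ≤ L · P¹(E), and the 1-dimensional packing measure satisfies 𝒫¹(f(E)) ≤ L · 𝒫¹(E). -/

import Mathlib

open Metric Set ENNReal NNReal

/-- The `δ`-packing premeasure `P¹_δ(S)`: supremum of `∑ 2rᵢ` over finite collections of
disjoint closed balls centered in `S` with `2rᵢ ≤ δ`. -/
noncomputable def packingPre {X : Type*} [PseudoMetricSpace X] (δ : ℝ) (S : Set X) : ℝ≥0∞ :=
  ⨆ (n : ℕ) (c : Fin n → X × ℝ)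
    (_ : (∀ i, (c i).1 ∈ S ∧ 0 < (c i).2 ∧ 2 * (c i).2 ≤ δ) ∧
      ∀ i j, i ≠ j →
        Disjoint (closedBall (c i).1 (c i).2) (closedBall (c j).1 (c j).2)),
    ∑ i, ENNReal.ofReal (2 * (c i).2)

/-- The 1-dimensional packing premeasure `P¹(S) = lim_{δ↓0} P¹_δ(S)`. -/
noncomputable def packingPremeasure {X : Type*} [PseudoMetricSpace X] (S : Set X) : ℝ≥0∞ :=
  ⨅ (δ : ℝ) (_ : 0 < δ), packingPre δ S

/-- The 1-dimensional packing measure `𝒫¹(S) = inf { ∑ P¹(Sₗ) : S ⊆ ⋃ Sₗ }`. -/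
noncomputable def packingMeasure {X : Type*} [PseudoMetricSpace X] (S : Set X) : ℝ≥0∞ :=
  ⨅ (t : ℕ → Set X) (_ : S ⊆ ⋃ i, t i), ∑' i, packingPremeasure (t i)

/-- In a real normed space, closed balls of positive radius whose centers are at
distance at most the sum of the radii are not disjoint. -/
lemma aux_not_disjoint {H : Type*} [NormedAddCommGroup H] [NormedSpace ℝ H] (x y : H) (r s : ℝ)
    (hr : 0 < r) (hs : 0 < s) (hd : dist x y ≤ r + s) :
    ¬ Disjoint (closedBall x r) (closedBall y s) := by
  rw [Set.not_disjoint_iff]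
  refine ⟨x + (r / (r + s)) • (y - x), ?_, ?_⟩
  · rw [mem_closedBall, dist_eq_norm]
    have : x + (r / (r + s)) • (y - x) - x = (r / (r + s)) • (y - x) := by abel
    rw [this, norm_smul]
    have h1 : ‖y - x‖ = dist x y := by rw [dist_eq_norm, norm_sub_rev]
    rw [h1, Real.norm_eq_abs, abs_of_nonneg (by positivity)]
    calc r / (r + s) * dist x y ≤ r / (r + s) * (r + s) := by
          exact mul_le_mul_of_nonneg_left hd (by positivity)
      _ = r := by field_simp
  · rw [mem_closedBall, dist_eq_norm]
    have : x + (r / (r + s)) • (y - x) - y = (1 - r / (r + s)) • (x - y) := by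
      rw [sub_smul, one_smul, smul_sub, smul_sub]; abel
    rw [this, norm_smul]
    have h1 : 1 - r / (r + s) = s / (r + s) := by field_simp; ring
    rw [h1, Real.norm_eq_abs, abs_of_nonneg (by positivity), ← dist_eq_norm]
    calc s / (r + s) * dist x y ≤ s / (r + s) * (r + s) := by
          exact mul_le_mul_of_nonneg_left hd (by positivity)
      _ = s := by field_simp

lemma aux_packingPre_mono {X : Type*} [PseudoMetricSpace X] {δ : ℝ} {S T : Set X}
    (hST : S ⊆ T) : packingPre δ S ≤ packingPre δ T := by
  refine iSup_le fun n => iSup_le fun c => iSup_le fun h => ?_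
  exact le_iSup_of_le n (le_iSup_of_le c (le_iSup_of_le
    ⟨fun i => ⟨hST (h.1 i).1, (h.1 i).2⟩, h.2⟩ le_rfl))

lemma aux_packingPremeasure_mono {X : Type*} [PseudoMetricSpace X] {S T : Set X}
    (hST : S ⊆ T) : packingPremeasure S ≤ packingPremeasure T :=
  iInf_mono fun _ => iInf_mono fun _ => aux_packingPre_mono hST

/-- The key pull-back estimate on the `δ`-packing premeasure. -/
lemma aux_packingPre_image {H : Type*} [NormedAddCommGroup H] [InnerProductSpace ℝ H]
    (E : Set ℝ) (f : ℝ → H) (L : ℝ≥0) (hf : LipschitzOnWith L f E) (hL : 0 < (L : ℝ))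
    (δ : ℝ) :
    packingPre δ (f '' E) ≤ (L : ℝ≥0∞) * packingPre (δ / L) E := by
  refine iSup_le fun n => iSup_le fun c => iSup_le fun h => ?_
  choose x hxE hfx using fun i => (h.1 i).1
  set c' : Fin n → ℝ × ℝ := fun i => (x i, (c i).2 / L) with hc'
  have hprop : (∀ i, (c' i).1 ∈ E ∧ 0 < (c' i).2 ∧ 2 * (c' i).2 ≤ δ / L) ∧
      ∀ i j, i ≠ j →
        Disjoint (closedBall (c' i).1 (c' i).2) (closedBall (c' j).1 (c' j).2) := by
    constructor
    · intro i
      refine ⟨hxE i, div_pos (h.1 i).2.1 hL, ?_⟩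
      rw [mul_div_assoc']
      gcongr
      exact (h.1 i).2.2
    · intro i j hij
      have hd := h.2 i j hij
      have hgt : (c i).2 + (c j).2 < dist (c i).1 (c j).1 := by
        by_contra hcon
        push_neg at hcon
        exact aux_not_disjoint _ _ _ _ (h.1 i).2.1 (h.1 j).2.1 hcon hd
      have hlip : dist (c i).1 (c j).1 ≤ L * dist (x i) (x j) := by
        rw [← hfx i, ← hfx j]
        exact hf.dist_le_mul _ (hxE i) _ (hxE j)
      have hxd : (c i).2 / L + (c j).2 / L < dist (x i) (x j) := by
        rw [← add_div, div_lt_iff₀ hL, mul_comm]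
        exact lt_of_lt_of_le hgt hlip
      exact closedBall_disjoint_closedBall hxd
  have hsum : ∑ i, ENNReal.ofReal (2 * (c i).2)
      = (L : ℝ≥0∞) * ∑ i, ENNReal.ofReal (2 * (c' i).2) := by
    rw [Finset.mul_sum]
    refine Finset.sum_congr rfl fun i _ => ?_
    have h1 : 2 * (c i).2 = (L : ℝ) * (2 * ((c i).2 / L)) := by field_simp
    rw [h1, ENNReal.ofReal_mul (le_of_lt hL), ENNReal.ofReal_coe_nnreal]
  rw [hsum]
  refine mul_le_mul_right ?_ _
  exact le_iSup_of_le n (le_iSup_of_le c' (le_iSup_of_le hprop le_rfl))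

lemma aux_packingPremeasure_image {H : Type*} [NormedAddCommGroup H] [InnerProductSpace ℝ H]
    (E : Set ℝ) (f : ℝ → H) (L : ℝ≥0) (hf : LipschitzOnWith L f E) (hL : 0 < (L : ℝ)) :
    packingPremeasure (f '' E) ≤ (L : ℝ≥0∞) * packingPremeasure E := by
  have h0 : (L : ℝ≥0∞) ≠ 0 := by
    simp only [ne_eq, ENNReal.coe_eq_zero]
    exact fun h => by simp [h] at hL
  have htop : (L : ℝ≥0∞) ≠ ∞ := ENNReal.coe_ne_top
  conv_rhs => rw [packingPremeasure]
  rw [ENNReal.mul_iInf_of_ne h0 htop]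
  refine le_iInf fun δ => ?_
  rw [ENNReal.mul_iInf_of_ne h0 htop]
  refine le_iInf fun hδ => ?_
  calc packingPremeasure (f '' E) ≤ packingPre ((L : ℝ) * δ) (f '' E) :=
        iInf₂_le _ (by positivity)
    _ ≤ (L : ℝ≥0∞) * packingPre (((L : ℝ) * δ) / L) E :=
        aux_packingPre_image E f L hf hL _
    _ = (L : ℝ≥0∞) * packingPre δ E := by rw [mul_div_cancel_left₀ _ (ne_of_gt hL)]

lemma aux_zero_case {H : Type*} [NormedAddCommGroup H] [InnerProductSpace ℝ H]
    (E : Set ℝ) (f : ℝ → H) (hf : LipschitzOnWith 0 f E) :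
    packingPremeasure (f '' E) = 0 := by
  have hconst : ∀ a ∈ E, ∀ b ∈ E, f a = f b := by
    intro a ha b hb
    have := hf.dist_le_mul a ha b hb
    simpa [dist_le_zero] using this
  have hpre : ∀ δ : ℝ, packingPre δ (f '' E) ≤ ENNReal.ofReal δ := by
    intro δ
    refine iSup_le fun n => iSup_le fun c => iSup_le fun h => ?_
    match n with
    | 0 => simp
    | 1 =>
      rw [Fin.sum_univ_one]
      exact ENNReal.ofReal_le_ofReal (h.1 0).2.2
    | (n + 2) =>
      exfalso
      have hd := h.2 0 1 (by simp [Fin.ext_iff])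
      obtain ⟨a, ha, hfa⟩ := (h.1 0).1
      obtain ⟨b, hb, hfb⟩ := (h.1 1).1
      have hcc : (c 0).1 = (c 1).1 := by rw [← hfa, ← hfb]; exact hconst a ha b hb
      have h1 : (c 0).1 ∈ closedBall (c 0).1 (c 0).2 := mem_closedBall_self (h.1 0).2.1.le
      have h2 : (c 0).1 ∈ closedBall (c 1).1 (c 1).2 := by
        rw [hcc]; exact mem_closedBall_self (h.1 1).2.1.le
      exact Set.disjoint_left.mp hd h1 h2
  refine le_antisymm ?_ zero_le
  refine ENNReal.le_of_forall_pos_le_add fun ε hε _ => ?_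
  rw [zero_add]
  calc packingPremeasure (f '' E) ≤ packingPre (ε : ℝ) (f '' E) := iInf₂_le _ (by positivity)
    _ ≤ ENNReal.ofReal (ε : ℝ) := hpre _
    _ = (ε : ℝ≥0∞) := ENNReal.ofReal_coe_nnreal

/-- An `L`-Lipschitz map `f : E → H`, `E ⊆ ℝ`, increases 1-dimensional packing premeasure
and packing measure by at most the factor `L`. -/
theorem statement4 {H : Type*} [NormedAddCommGroup H] [InnerProductSpace ℝ H]
    (E : Set ℝ) (f : ℝ → H) (L : ℝ≥0) (hf : LipschitzOnWith L f E) :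
    packingPremeasure (f '' E) ≤ (L : ℝ≥0∞) * packingPremeasure E ∧
    packingMeasure (f '' E) ≤ (L : ℝ≥0∞) * packingMeasure E := by
  rcases eq_or_lt_of_le (zero_le : (0 : ℝ≥0) ≤ L) with hL0 | hLpos
  · -- L = 0
    subst hL0
    have h0 := aux_zero_case E f hf
    constructor
    · simp [h0]
    · have hmeas : packingMeasure (f '' E) = 0 := by
        refine le_antisymm ?_ zero_le
        calc packingMeasure (f '' E) ≤ ∑' _ : ℕ, packingPremeasure (f '' E) :=
              iInf₂_le (fun _ => f '' E) (Set.subset_iUnion (fun _ : ℕ => f '' E) 0)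
          _ = 0 := by simp [h0]
      simp [hmeas]
  · -- L > 0
    have hL : 0 < (L : ℝ) := hLpos
    have h0 : (L : ℝ≥0∞) ≠ 0 := by
      simp only [ne_eq, ENNReal.coe_eq_zero]
      exact ne_of_gt hLpos
    have htop : (L : ℝ≥0∞) ≠ ∞ := ENNReal.coe_ne_top
    refine ⟨aux_packingPremeasure_image E f L hf hL, ?_⟩
    conv_rhs => rw [packingMeasure]
    rw [ENNReal.mul_iInf_of_ne h0 htop]
    refine le_iInf fun t => ?_
    rw [ENNReal.mul_iInf_of_ne h0 htop]
    refine le_iInf fun ht => ?_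
    have hcover : f '' E ⊆ ⋃ i, f '' (t i ∩ E) := by
      rintro _ ⟨a, ha, rfl⟩
      obtain ⟨i, hi⟩ := Set.mem_iUnion.mp (ht ha)
      exact Set.mem_iUnion.mpr ⟨i, ⟨a, ⟨hi, ha⟩, rfl⟩⟩
    calc packingMeasure (f '' E) ≤ ∑' i, packingPremeasure (f '' (t i ∩ E)) :=
          iInf₂_le (fun i => f '' (t i ∩ E)) hcover
      _ ≤ ∑' i, (L : ℝ≥0∞) * packingPremeasure (t i) := by
          refine ENNReal.tsum_le_tsum fun i => ?_
          calc packingPremeasure (f '' (t i ∩ E))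
              ≤ (L : ℝ≥0∞) * packingPremeasure (t i ∩ E) :=
                aux_packingPremeasure_image _ f L (hf.mono Set.inter_subset_right) hL
            _ ≤ (L : ℝ≥0∞) * packingPremeasure (t i) :=
                mul_le_mul_right (aux_packingPremeasure_mono Set.inter_subset_left) _
      _ = (L : ℝ≥0∞) * ∑' i, packingPremeasure (t i) := ENNReal.tsum_mul_left
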